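/- Let Z(x) ≥ 0 be a random variable such that lim_{z↓0} P{Z(x) ≤ z}/z^k = c for some constant c ≥ 0, and suppose Z(x) ≤ 1 a.s. Then lim_{n→∞} n^k E[(1−Z(x))^{n−1}] = c·k!. -/

import Mathlib

open MeasureTheory Filter

lemma beta_nat (k : ℕ) : ∀ m : ℕ, ∫ u in (0:ℝ)..1, u ^ k * (1 - u) ^ m
    = (Nat.factorial k * Nat.factorial m : ℝ) / Nat.factorial (k + m + 1) := by
  induction k with
  | zero =>
    intro m
    have : ∀ u : ℝ, (u:ℝ) ^ 0 * (1 - u) ^ m = (fun x : ℝ => x ^ m) (1 - u) := by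
      intro u; simp
    simp only [this]
    rw [intervalIntegral.integral_comp_sub_left (fun x : ℝ => x ^ m) 1]
    rw [integral_pow]
    norm_num
    rw [Nat.factorial_succ]
    have : ((m.factorial : ℝ)) ≠ 0 := by positivity
    push_cast
    field_simp
  | succ k ih =>
    intro m
    have hparts : ∫ u in (0:ℝ)..1, u ^ (k+1) * (1 - u) ^ m
        = ((k:ℝ)+1) / ((m:ℝ)+1) * ∫ u in (0:ℝ)..1, u ^ k * (1 - u) ^ (m+1) := by
      have hu : ∀ x ∈ Set.uIcc (0:ℝ) 1, HasDerivAt (fun x : ℝ => x ^ (k+1))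
          (((k:ℝ)+1) * x ^ k) x := by
        intro x _
        simpa using (hasDerivAt_pow (k+1) x)
      have hv : ∀ x ∈ Set.uIcc (0:ℝ) 1, HasDerivAt (fun x : ℝ => -(1-x)^(m+1) / ((m:ℝ)+1))
          ((1 - x) ^ m) x := by
        intro x _
        have h1 : HasDerivAt (fun x : ℝ => (1 - x)) (-1) x := by
          simpa using (hasDerivAt_id x).const_sub 1
        have h2 : HasDerivAt (fun x : ℝ => (1 - x) ^ (m+1))
            ((((m:ℝ)+1) * (1-x)^m) * (-1)) x := by
          simpa using (h1.fun_pow (m+1))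
        have h3 := (h2.neg).div_const ((m:ℝ)+1)
        have e : (1 - x) ^ m = -((((m:ℝ)+1) * (1-x)^m) * (-1)) / ((m:ℝ)+1) := by
          rw [eq_div_iff (by positivity)]; ring
        rw [e]; exact h3
      have hInt1 : IntervalIntegrable (fun x : ℝ => ((k:ℝ)+1) * x ^ k) volume 0 1 :=
        (continuous_const.mul (continuous_pow k)).intervalIntegrable 0 1
      have hInt2 : IntervalIntegrable (fun x : ℝ => (1 - x) ^ m) volume 0 1 :=
        (Continuous.pow (continuous_const.sub continuous_id) m).intervalIntegrable 0 1
      have := intervalIntegral.integral_mul_deriv_eq_deriv_mul hu hv hInt1 hInt2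
      have hcongr : ∀ x : ℝ, (↑k + 1) * x ^ k * (-(1 - x) ^ (m + 1) / (↑m + 1))
          = (-(((k:ℝ)+1)/((m:ℝ)+1))) * (x ^ k * (1 - x) ^ (m+1)) := by
        intro x
        have hm : ((m:ℝ)+1) ≠ 0 := by positivity
        field_simp
      rw [this]
      simp only [hcongr]
      rw [intervalIntegral.integral_const_mul]
      norm_num
    rw [hparts, ih (m+1)]
    have h1 : ((m:ℝ)+1) ≠ 0 := by positivity
    have h2 : ((k + (m+1) + 1).factorial : ℝ) ≠ 0 := by positivity
    have hkm : (k + 1) + m + 1 = k + (m + 1) + 1 := by omega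
    rw [hkm]
    rw [Nat.factorial_succ (k), Nat.factorial_succ m]
    push_cast
    field_simp

lemma asc_cast (n : ℕ) : ∀ k : ℕ, ((n.ascFactorial k : ℝ)) = ∏ j ∈ Finset.range k, ((n:ℝ) + j)
  | 0 => by simp
  | (k+1) => by
    rw [Nat.ascFactorial_succ, Finset.prod_range_succ]
    push_cast
    rw [asc_cast n k]
    ring

lemma prod_ratio_le_one (k n : ℕ) : ∏ j ∈ Finset.range k, ((n:ℝ)/((n:ℝ)+j)) ≤ 1 := by
  apply Finset.prod_le_one
  · intro j _; positivity
  · intro j _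
    rcases Nat.eq_zero_or_pos n with h | h
    · simp [h]
    · apply div_le_one_of_le₀ <;> [skip; positivity]
      simp only [le_add_iff_nonneg_right]; positivity

lemma prod_ratio_tendsto (k : ℕ) :
    Tendsto (fun n : ℕ => ∏ j ∈ Finset.range k, ((n:ℝ)/((n:ℝ)+j))) atTop (nhds 1) := by
  have : (1:ℝ) = ∏ j ∈ Finset.range k, (1:ℝ) := by simp
  rw [this]
  apply tendsto_finset_prod
  intro j _
  exact tendsto_natCast_div_add_atTop (j : ℝ)

lemma Bn_eq (k n : ℕ) (hn : 2 ≤ n) :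
    (n:ℝ)^k * ((n:ℝ)-1) * ((Nat.factorial k : ℝ) * (Nat.factorial (n-2)) / (Nat.factorial (n+k-1)))
    = (Nat.factorial k : ℝ) * ∏ j ∈ Finset.range k, ((n:ℝ)/((n:ℝ)+j)) := by
  have h1 : ((n:ℝ) - 1) * (Nat.factorial (n-2) : ℝ) = (Nat.factorial (n-1) : ℝ) := by
    have : n - 1 = (n-2) + 1 := by omega
    rw [this, Nat.factorial_succ]
    push_cast [show ((n:ℕ) - 2 : ℕ) = n - 2 from rfl]
    have : ((n - 2 : ℕ) : ℝ) = (n:ℝ) - 2 := by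
      have := Nat.cast_sub (by omega : 2 ≤ n) (R := ℝ); push_cast at this ⊢; linarith
    rw [this]; ring
  have h2 : (Nat.factorial (n+k-1) : ℝ) = (Nat.factorial (n-1) : ℝ) * (n.ascFactorial k : ℝ) := by
    have := Nat.factorial_mul_ascFactorial (n-1) k
    have hn1 : n - 1 + 1 = n := by omega
    have hn2 : n - 1 + k = n + k - 1 := by omega
    rw [hn1, hn2] at this
    rw [← this]; push_cast; ring
  have h3 : ((n.ascFactorial k : ℝ)) = ∏ j ∈ Finset.range k, ((n:ℝ) + j) := asc_cast n k
  have h4 : (0:ℝ) < ∏ j ∈ Finset.range k, ((n:ℝ) + j) := by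
    apply Finset.prod_pos; intro j _; have : (0:ℝ) < n := by positivity
    positivity
  have h5 : ((Nat.factorial (n-1) : ℝ)) ≠ 0 := by positivity
  rw [Finset.prod_div_distrib, Finset.prod_const, Finset.card_range, h2, h3]
  field_simp
  linear_combination h1

-- full Beta identity in the needed form
lemma Bfull_eq (k n : ℕ) (hn : 2 ≤ n) :
    (n:ℝ)^k * ((n:ℝ)-1) * ∫ u in Set.Ioc (0:ℝ) 1, u ^ k * (1 - u) ^ (n-2)
    = (Nat.factorial k : ℝ) * ∏ j ∈ Finset.range k, ((n:ℝ)/((n:ℝ)+j)) := by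
  have h1 : ∫ u in Set.Ioc (0:ℝ) 1, u ^ k * (1 - u) ^ (n-2)
      = ∫ u in (0:ℝ)..1, u ^ k * (1 - u) ^ (n-2) := by
    rw [intervalIntegral.integral_of_le (by norm_num : (0:ℝ) ≤ 1)]
  rw [h1, beta_nat k (n-2), show k + (n-2) + 1 = n + k - 1 by omega]
  exact Bn_eq k n hn

-- integrability helper
lemma int_helper {f : ℝ → ℝ} (hf : Measurable f) {C : ℝ}
    (hb : ∀ u ∈ Set.Ioc (0:ℝ) 1, |f u| ≤ C) {s : Set ℝ} (hs : MeasurableSet s)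
    (hsub : s ⊆ Set.Ioc (0:ℝ) 1) : IntegrableOn f s volume := by
  have hfin : volume s ≠ ⊤ := by
    apply ne_of_lt
    calc volume s ≤ volume (Set.Ioc (0:ℝ) 1) := measure_mono hsub
      _ < ⊤ := by simp
  have : IsFiniteMeasure (volume.restrict s) := by
    constructor
    rwa [Measure.restrict_apply_univ, lt_top_iff_ne_top]
  apply Integrable.mono' (g := fun _ => C) (integrable_const C)
  · exact (hf.aestronglyMeasurable).restrict
  · rw [ae_restrict_iff' hs]
    exact Eventually.of_forall fun u hu => hb u (hsub hu)

set_option maxHeartbeats 1000000 in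
lemma tendsto_main (k : ℕ) (c : ℝ) (hc : 0 ≤ c) (F : ℝ → ℝ)
    (hFm : Measurable F) (hF0 : ∀ u, 0 ≤ F u) (hF1 : ∀ u, F u ≤ 1)
    (hlim : Tendsto (fun z : ℝ => F z / z ^ k) (nhdsWithin 0 (Set.Ioi 0)) (nhds c)) :
    Tendsto (fun n : ℕ => (n:ℝ)^k * ((n:ℝ)-1) * ∫ u in Set.Ioc (0:ℝ) 1, F u * (1-u)^(n-2))
      atTop (nhds (c * Nat.factorial k)) := by
  rw [Metric.tendsto_atTop]
  intro ε hε
  set K : ℝ := (Nat.factorial k : ℝ) with hK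
  have hK0 : 0 < K := by positivity
  set ε₁ : ℝ := ε / (2 * (K + 1)) with hε₁def
  have hε₁ : 0 < ε₁ := by positivity
  obtain ⟨δ₀, hδ₀pos, hδ₀⟩ := Metric.tendsto_nhdsWithin_nhds.mp hlim ε₁ hε₁
  set δ : ℝ := min (δ₀/2) (1/2) with hδdef
  have hδpos : 0 < δ := by positivity
  have hδle : δ ≤ 1/2 := min_le_right _ _
  have hδ1 : δ < 1 := by linarith
  have hδlt : δ < δ₀ := lt_of_le_of_lt (min_le_left _ _) (by linarith)
  have hkey : ∀ u ∈ Set.Ioc (0:ℝ) δ, |F u - c * u ^ k| ≤ ε₁ * u ^ k := by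
    intro u hu
    have hu0 : 0 < u := hu.1
    have hud : dist u 0 < δ₀ := by
      rw [Real.dist_eq, sub_zero, abs_of_pos hu0]; linarith [hu.2]
    have h2 := hδ₀ (Set.mem_Ioi.mpr hu0) hud
    rw [Real.dist_eq] at h2
    have hup : (0:ℝ) < u ^ k := by positivity
    have h3 : |F u / u ^ k - c| * u^k ≤ ε₁ * u^k := by nlinarith [le_of_lt h2]
    have heq : F u - c * u^k = (F u / u^k - c) * u^k := by
      field_simp
    calc |F u - c * u ^ k| = |F u / u^k - c| * u^k := by
          rw [heq, abs_mul, abs_of_pos hup]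
      _ ≤ ε₁ * u ^ k := h3
  set r : ℝ := 1 - δ with hrdef
  have hr0 : 0 < r := by simp only [hrdef]; linarith
  have hr1 : r < 1 := by simp only [hrdef]; linarith
  -- auxiliary sequences
  set T : ℕ → ℝ := fun n => (n:ℝ)^k * ((n:ℝ)-1) * r^(n-2) with hTdef
  set b : ℕ → ℝ := fun n => K * ∏ j ∈ Finset.range k, ((n:ℝ)/((n:ℝ)+j)) with hbdef
  have hTlim : Tendsto T atTop (nhds 0) := by
    have hU : Tendsto (fun n : ℕ => ((n:ℝ)^(k+1) * r^n) * (r^2)⁻¹) atTop (nhds 0) := by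
      have := (tendsto_pow_const_mul_const_pow_of_abs_lt_one (k+1)
        (by rw [abs_of_pos hr0]; exact hr1)).mul_const ((r^2)⁻¹)
      simpa using this
    apply squeeze_zero_norm' _ hU
    filter_upwards [eventually_ge_atTop 2] with n hn
    have h1 : (0:ℝ) ≤ (n:ℝ) - 1 := by
      have : (2:ℝ) ≤ (n:ℝ) := by exact_mod_cast hn
      linarith
    have h2 : r^(n-2) = r^n * (r^2)⁻¹ := by
      rw [pow_sub₀ r (ne_of_gt hr0) (by omega : 2 ≤ n)]
    rw [Real.norm_eq_abs, hTdef]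
    have hT0 : (0:ℝ) ≤ (n:ℝ)^k * ((n:ℝ)-1) * r^(n-2) := by positivity
    rw [abs_of_nonneg hT0, h2]
    have : (n:ℝ)^k * ((n:ℝ)-1) ≤ (n:ℝ)^(k+1) := by
      rw [pow_succ]
      apply mul_le_mul_of_nonneg_left _ (by positivity)
      linarith
    have hrn : (0:ℝ) ≤ r^n * (r^2)⁻¹ := by positivity
    calc (n:ℝ)^k * ((n:ℝ)-1) * (r^n * (r^2)⁻¹) ≤ (n:ℝ)^(k+1) * (r^n * (r^2)⁻¹) :=
          mul_le_mul_of_nonneg_right this hrn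
      _ = (n:ℝ)^(k+1) * r^n * (r^2)⁻¹ := by ring
  have hblim : Tendsto b atTop (nhds K) := by
    have := (prod_ratio_tendsto k).const_mul K
    rw [mul_one] at this
    exact this
  set G : ℕ → ℝ := fun n => ε₁ * K + (1+c) * T n + c * (K - b n) with hGdef
  have hGlim : Tendsto G atTop (nhds (ε₁ * K)) := by
    have h1 : Tendsto (fun n => (1+c) * T n) atTop (nhds 0) := by
      simpa using hTlim.const_mul (1+c)
    have h2 : Tendsto (fun n => c * (K - b n)) atTop (nhds 0) := by
      have := ((tendsto_const_nhds (x := K)).sub hblim).const_mul c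
      simpa using this
    have := ((tendsto_const_nhds (x := ε₁ * K)).add h1).add h2
    simpa using this
  have hεK : ε₁ * K < ε := by
    rw [hε₁def]
    rw [div_mul_eq_mul_div, div_lt_iff₀ (by positivity)]
    nlinarith
  have hGev : ∀ᶠ n in atTop, G n < ε := hGlim.eventually_lt_const hεK
  -- the key estimate
  have hEst : ∀ᶠ n : ℕ in atTop, |(n:ℝ)^k * ((n:ℝ)-1) *
      (∫ u in Set.Ioc (0:ℝ) 1, F u * (1-u)^(n-2)) - c * K| ≤ G n := by
    filter_upwards [eventually_ge_atTop 2] with n hn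
    set φ : ℝ → ℝ := fun u => (1-u)^(n-2) with hφdef
    have hφm : Measurable φ := (measurable_const.sub measurable_id).pow_const _
    have hφ01 : ∀ u ∈ Set.Ioc (0:ℝ) 1, 0 ≤ φ u ∧ φ u ≤ 1 := by
      intro u hu
      constructor
      · apply pow_nonneg; linarith [hu.2]
      · apply pow_le_one₀ (by linarith [hu.2]) (by linarith [hu.1])
    have hs1 : MeasurableSet (Set.Ioc (0:ℝ) δ) := measurableSet_Ioc
    have hs2 : MeasurableSet (Set.Ioc δ (1:ℝ)) := measurableSet_Ioc
    have hsub1 : Set.Ioc (0:ℝ) δ ⊆ Set.Ioc 0 1 := Set.Ioc_subset_Ioc_right hδ1.le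
    have hsub2 : Set.Ioc δ (1:ℝ) ⊆ Set.Ioc 0 1 := Set.Ioc_subset_Ioc_left hδpos.le
    -- integrability
    have hbFφ : ∀ u ∈ Set.Ioc (0:ℝ) 1, |F u * φ u| ≤ 1 := by
      intro u hu
      have := hφ01 u hu
      rw [abs_mul, abs_of_nonneg (hF0 u), abs_of_nonneg this.1]
      calc F u * φ u ≤ 1 * 1 := by
            apply mul_le_mul (hF1 u) this.2 this.1 zero_le_one
        _ = 1 := by ring
    have hbuk : ∀ u ∈ Set.Ioc (0:ℝ) 1, |u^k * φ u| ≤ 1 := by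
      intro u hu
      have h2 := hφ01 u hu
      have h3 : 0 ≤ u^k := pow_nonneg hu.1.le k
      rw [abs_mul, abs_of_nonneg h3, abs_of_nonneg h2.1]
      calc u^k * φ u ≤ 1 * 1 := by
            apply mul_le_mul (pow_le_one₀ hu.1.le hu.2) h2.2 h2.1 zero_le_one
        _ = 1 := by ring
    have hbdiff : ∀ u ∈ Set.Ioc (0:ℝ) 1, |(F u - c * u^k) * φ u| ≤ 1 + c := by
      intro u hu
      have h2 := hφ01 u hu
      have h3 : 0 ≤ u^k := pow_nonneg hu.1.le k
      have h4 : u^k ≤ 1 := pow_le_one₀ hu.1.le hu.2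
      rw [abs_mul, abs_of_nonneg h2.1]
      have h5 : |F u - c*u^k| ≤ 1 + c := by
        rw [abs_le]; constructor <;> nlinarith [hF0 u, hF1 u]
      calc |F u - c*u^k| * φ u ≤ (1+c) * 1 :=
            mul_le_mul h5 h2.2 h2.1 (by linarith)
        _ = 1 + c := by ring
    have hmFφ : Measurable (fun u => F u * φ u) := hFm.mul hφm
    have hmuk : Measurable (fun u : ℝ => u^k * φ u) := (measurable_id.pow_const k).mul hφm
    have hmdiff : Measurable (fun u => (F u - c * u^k) * φ u) :=
      (hFm.sub ((measurable_id.pow_const k).const_mul c)).mul hφm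
    have hIF1 := int_helper hmFφ hbFφ hs1 hsub1
    have hIF2 := int_helper hmFφ hbFφ hs2 hsub2
    have hIuk1 := int_helper hmuk hbuk hs1 hsub1
    have hIuk2 := int_helper hmuk hbuk hs2 hsub2
    have hIukfull := int_helper hmuk hbuk measurableSet_Ioc (subset_rfl)
    have hIdiff1 := int_helper hmdiff hbdiff hs1 hsub1
    -- decomposition
    have hdisj : Disjoint (Set.Ioc (0:ℝ) δ) (Set.Ioc δ 1) := Set.Ioc_disjoint_Ioc_of_le le_rfl
    have hunion : Set.Ioc (0:ℝ) δ ∪ Set.Ioc δ 1 = Set.Ioc (0:ℝ) 1 :=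
      Set.Ioc_union_Ioc_eq_Ioc hδpos.le hδ1.le
    have hsplitF : (∫ u in Set.Ioc (0:ℝ) 1, F u * φ u)
        = (∫ u in Set.Ioc (0:ℝ) δ, F u * φ u) + (∫ u in Set.Ioc δ 1, F u * φ u) := by
      rw [← hunion]
      exact setIntegral_union hdisj hs2 hIF1 hIF2
    have hsplituk : (∫ u in Set.Ioc (0:ℝ) 1, u^k * φ u)
        = (∫ u in Set.Ioc (0:ℝ) δ, u^k * φ u) + (∫ u in Set.Ioc δ 1, u^k * φ u) := by
      rw [← hunion]
      exact setIntegral_union hdisj hs2 hIuk1 hIuk2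
    have hsplit1 : (∫ u in Set.Ioc (0:ℝ) δ, F u * φ u)
        = (∫ u in Set.Ioc (0:ℝ) δ, (F u - c * u^k) * φ u)
          + c * ∫ u in Set.Ioc (0:ℝ) δ, u^k * φ u := by
      rw [← integral_const_mul, ← integral_add hIdiff1 (hIuk1.const_mul c)]
      apply integral_congr_ae (Eventually.of_forall fun u => by ring)
    set E1 : ℝ := ∫ u in Set.Ioc (0:ℝ) δ, (F u - c * u^k) * φ u with hE1
    set E2 : ℝ := ∫ u in Set.Ioc δ (1:ℝ), F u * φ u with hE2
    set B2 : ℝ := ∫ u in Set.Ioc δ (1:ℝ), u^k * φ u with hB2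
    set B : ℝ := ∫ u in Set.Ioc (0:ℝ) 1, u^k * φ u with hB
    set M : ℝ := (n:ℝ)^k * ((n:ℝ)-1) with hM
    have hn2 : (2:ℝ) ≤ (n:ℝ) := by exact_mod_cast hn
    have hM0 : 0 ≤ M := by
      apply mul_nonneg (by positivity); linarith
    have hMB : M * B = b n := Bfull_eq k n hn
    -- bound on E1
    have hB1nonneg : 0 ≤ ∫ u in Set.Ioc (0:ℝ) δ, u^k * φ u := by
      apply setIntegral_nonneg hs1
      intro u hu
      exact mul_nonneg (pow_nonneg hu.1.le k) (hφ01 u (hsub1 hu)).1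
    have hB1leB : (∫ u in Set.Ioc (0:ℝ) δ, u^k * φ u) ≤ B := by
      apply setIntegral_mono_set hIukfull
      · rw [EventuallyLE, ae_restrict_iff' measurableSet_Ioc]
        exact Eventually.of_forall fun u hu =>
          mul_nonneg (pow_nonneg hu.1.le k) (hφ01 u hu).1
      · exact HasSubset.Subset.eventuallyLE hsub1
    have hE1bound : |E1| ≤ ε₁ * B := by
      have h1 : ‖E1‖ ≤ ∫ u in Set.Ioc (0:ℝ) δ, ε₁ * (u^k * φ u) := by
        apply norm_integral_le_of_norm_le ((hIuk1.const_mul ε₁))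
        rw [ae_restrict_iff' hs1]
        apply Eventually.of_forall
        intro u hu
        rw [Real.norm_eq_abs, abs_mul, abs_of_nonneg (hφ01 u (hsub1 hu)).1]
        calc |F u - c*u^k| * φ u ≤ (ε₁ * u^k) * φ u :=
              mul_le_mul_of_nonneg_right (hkey u hu) (hφ01 u (hsub1 hu)).1
          _ = ε₁ * (u^k * φ u) := by ring
      rw [Real.norm_eq_abs] at h1
      calc |E1| ≤ ∫ u in Set.Ioc (0:ℝ) δ, ε₁ * (u^k * φ u) := h1
        _ = ε₁ * ∫ u in Set.Ioc (0:ℝ) δ, u^k * φ u := integral_const_mul _ _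
        _ ≤ ε₁ * B := mul_le_mul_of_nonneg_left hB1leB hε₁.le
    -- bounds on E2 and B2 via r^(n-2)
    have htail : ∀ (f : ℝ → ℝ), Measurable f →
        (∀ u ∈ Set.Ioc (0:ℝ) 1, |f u| ≤ 1) →
        |∫ u in Set.Ioc δ (1:ℝ), f u * φ u| ≤ r^(n-2) := by
      intro f hf hbf
      have h1 : ‖∫ u in Set.Ioc δ (1:ℝ), f u * φ u‖
          ≤ ∫ _u in Set.Ioc δ (1:ℝ), r^(n-2) := by
        apply norm_integral_le_of_norm_le (integrable_const _)
        rw [ae_restrict_iff' hs2]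
        apply Eventually.of_forall
        intro u hu
        rw [Real.norm_eq_abs, abs_mul, abs_of_nonneg (hφ01 u (hsub2 hu)).1]
        have h2 : φ u ≤ r^(n-2) := by
          apply pow_le_pow_left₀ (by linarith [(hsub2 hu).2]) _
          simp only [hrdef]; linarith [hu.1]
        calc |f u| * φ u ≤ 1 * r^(n-2) :=
              mul_le_mul (hbf u (hsub2 hu)) h2 (hφ01 u (hsub2 hu)).1 zero_le_one
          _ = r^(n-2) := by ring
      rw [Real.norm_eq_abs] at h1
      calc |∫ u in Set.Ioc δ (1:ℝ), f u * φ u| ≤ ∫ _u in Set.Ioc δ (1:ℝ), r^(n-2) := h1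
        _ = (volume (Set.Ioc δ (1:ℝ))).toReal * r^(n-2) := by
            rw [setIntegral_const]; simp [smul_eq_mul]
            left; rw [ENNReal.toReal_ofReal (by linarith)]; exact max_eq_left (by linarith)
        _ ≤ 1 * r^(n-2) := by
            apply mul_le_mul_of_nonneg_right _ (by positivity)
            rw [Real.volume_Ioc, ENNReal.toReal_ofReal (by linarith)]
            linarith
        _ = r^(n-2) := by ring
    have hE2bound : |E2| ≤ r^(n-2) := htail F hFm (fun u hu => by
      rw [abs_of_nonneg (hF0 u)]; exact hF1 u)
    have hB2bound : |B2| ≤ r^(n-2) := htail (fun u => u^k) (measurable_id.pow_const k)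
      (fun u hu => by
        rw [abs_of_nonneg (pow_nonneg hu.1.le k)]; exact pow_le_one₀ hu.1.le hu.2)
    -- combine
    have hbn_le : b n ≤ K := by
      have := prod_ratio_le_one k n
      calc b n = K * ∏ j ∈ Finset.range k, ((n:ℝ)/((n:ℝ)+j)) := rfl
        _ ≤ K * 1 := mul_le_mul_of_nonneg_left this hK0.le
        _ = K := by ring
    have hdecomp : M * (∫ u in Set.Ioc (0:ℝ) 1, F u * φ u) - c * K
        = M * E1 + M * E2 - c * (M * B2) - c * (K - b n) := by
      rw [hsplitF, hsplit1]
      have hB1 : (∫ u in Set.Ioc (0:ℝ) δ, u^k * φ u) = B - B2 := by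
        linarith [hsplituk]
      rw [hB1, ← hMB]
      ring
    rw [hdecomp]
    have hTn : M * r^(n-2) = T n := rfl
    calc |M * E1 + M * E2 - c * (M * B2) - c * (K - b n)|
        ≤ |M * E1| + |M * E2| + c * |M * B2| + c * (K - b n) := by
          have h1 : |M * E1 + M * E2 - c * (M * B2) - c * (K - b n)|
              ≤ |M * E1 + M * E2 - c * (M * B2)| + |c * (K - b n)| := abs_sub _ _
          have h2 : |M * E1 + M * E2 - c * (M * B2)| ≤ |M * E1 + M * E2| + |c * (M * B2)| :=
            abs_sub _ _
          have h3 : |M * E1 + M * E2| ≤ |M * E1| + |M * E2| := abs_add_le _ _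
          have h4 : |c * (M * B2)| = c * |M * B2| := by
            rw [abs_mul, abs_of_nonneg hc]
          have h5 : |c * (K - b n)| = c * (K - b n) := by
            rw [abs_mul, abs_of_nonneg hc, abs_of_nonneg (by linarith)]
          linarith
      _ ≤ ε₁ * K + (1 + c) * T n + c * (K - b n) := by
          have hBnonneg : 0 ≤ B := le_trans hB1nonneg hB1leB
          have hME1 : |M * E1| ≤ ε₁ * (M * B) := by
            rw [abs_mul, abs_of_nonneg hM0]
            calc M * |E1| ≤ M * (ε₁ * B) := mul_le_mul_of_nonneg_left hE1bound hM0
              _ = ε₁ * (M * B) := by ring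
          have hMBK : M * B ≤ K := by rw [hMB]; exact hbn_le
          have hME1' : |M * E1| ≤ ε₁ * K := le_trans hME1
            (mul_le_mul_of_nonneg_left hMBK hε₁.le)
          have hME2 : |M * E2| ≤ T n := by
            rw [abs_mul, abs_of_nonneg hM0, ← hTn]
            exact mul_le_mul_of_nonneg_left hE2bound hM0
          have hMB2 : |M * B2| ≤ T n := by
            rw [abs_mul, abs_of_nonneg hM0, ← hTn]
            exact mul_le_mul_of_nonneg_left hB2bound hM0
          have hMB2' : c * |M * B2| ≤ c * T n :=
            mul_le_mul_of_nonneg_left hMB2 hc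
          linarith
      _ = G n := rfl
  -- conclude
  obtain ⟨N1, hN1⟩ := eventually_atTop.mp hGev
  obtain ⟨N2, hN2⟩ := eventually_atTop.mp hEst
  refine ⟨max N1 N2, fun n hn => ?_⟩
  have h1 := hN1 n (le_trans (le_max_left _ _) hn)
  have h2 := hN2 n (le_trans (le_max_right _ _) hn)
  rw [Real.dist_eq]
  calc |(n:ℝ)^k * ((n:ℝ)-1) * (∫ u in Set.Ioc (0:ℝ) 1, F u * (1-u)^(n-2)) - c * K| ≤ G n := h2
    _ < ε := h1


lemma fubini_identity
    {Ω : Type*} [MeasurableSpace Ω] (P : Measure Ω) [IsProbabilityMeasure P]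
    (Z : Ω → ℝ) (hZmeas : Measurable Z)
    (hZ : ∀ᵐ ω ∂P, 0 ≤ Z ω ∧ Z ω ≤ 1) (n : ℕ) (hn : 2 ≤ n) :
    ∫ ω, (1 - Z ω) ^ (n - 1) ∂P
    = ((n:ℝ)-1) * ∫ u in Set.Ioc (0:ℝ) 1, (P {ω | Z ω ≤ u}).toReal * (1-u)^(n-2) := by
  set g : ℝ → ℝ := fun u => ((n:ℝ)-1) * (1-u)^(n-2) with hg
  have hn2 : (2:ℝ) ≤ (n:ℝ) := by exact_mod_cast hn
  set ν : Measure ℝ := volume.restrict (Set.Ioc (0:ℝ) 1) with hν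
  have hνfin : IsFiniteMeasure ν := by
    constructor
    rw [hν, Measure.restrict_apply_univ, Real.volume_Ioc]
    simp
  -- pointwise identity
  have hpoint : ∀ z : ℝ, 0 ≤ z → z ≤ 1 →
      (∫ u in Set.Ioc (0:ℝ) 1, (if z ≤ u then g u else 0)) = (1 - z) ^ (n-1) := by
    intro z hz0 hz1
    have h1 : (fun u : ℝ => if z ≤ u then g u else 0) = (Set.Ici z).indicator g := by
      funext u
      by_cases h : z ≤ u <;> simp [Set.indicator, h]
    rw [h1, setIntegral_indicator measurableSet_Ici]
    have h2 : ((Set.Ioc (0:ℝ) 1 ∩ Set.Ici z : Set ℝ) : Set ℝ) =ᵐ[(volume : Measure ℝ)] (Set.Ioc z 1 : Set ℝ) := by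
      rw [MeasureTheory.ae_eq_set]
      constructor
      · refine measure_mono_null ?_ (measure_singleton z)
        intro u hu
        simp only [Set.mem_diff, Set.mem_inter_iff, Set.mem_Ioc, Set.mem_Ici,
          Set.mem_singleton_iff] at *
        have h2a := hu.1; have h3 := hu.2
        by_contra hne
        exact h3 ⟨lt_of_le_of_ne h2a.2 (Ne.symm hne), h2a.1.2⟩
      · refine measure_mono_null ?_ (measure_empty (μ := volume))
        intro u hu
        simp only [Set.mem_diff, Set.mem_inter_iff, Set.mem_Ioc, Set.mem_Ici] at hu
        exact absurd ⟨⟨lt_of_le_of_lt hz0 hu.1.1, hu.1.2⟩, hu.1.1.le⟩ hu.2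
    rw [setIntegral_congr_set h2]
    have h3 : (∫ u in Set.Ioc z 1, g u) = ∫ u in z..1, g u := by
      rw [intervalIntegral.integral_of_le hz1]
    rw [h3, hg]
    rw [intervalIntegral.integral_const_mul]
    have h4 : (∫ u in z..1, (1-u)^(n-2))
        = ∫ x in (1-(1:ℝ))..(1-z), x^(n-2) := by
      rw [← intervalIntegral.integral_comp_sub_left (fun x => x^(n-2)) 1]
    rw [h4]
    norm_num [integral_pow]
    have h5 : n - 2 + 1 = n - 1 := by omega
    rw [h5]
    have h6 : ((n:ℝ) - 1) = ((n-2:ℕ):ℝ) + 1 := by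
      have : ((n-2:ℕ):ℝ) = (n:ℝ) - 2 := by
        have := Nat.cast_sub (by omega : 2 ≤ n) (R := ℝ); push_cast at this ⊢; linarith
      rw [this]; ring
    rw [h6, mul_div_cancel₀]
    positivity
  -- the two-variable function
  set f : Ω → ℝ → ℝ := fun ω u => if Z ω ≤ u then g u else 0 with hf
  have hfmeas : Measurable (Function.uncurry f) := by
    apply Measurable.ite
    · exact measurableSet_le (hZmeas.comp measurable_fst) measurable_snd
    · exact ((measurable_const.sub measurable_snd).pow_const _).const_mul _
    · exact measurable_const
  have hfint : Integrable (Function.uncurry f) (P.prod ν) := by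
    have hC : ∀ᵐ p ∂(P.prod ν), ‖Function.uncurry f p‖ ≤ (n:ℝ) - 1 := by
      have hae : ∀ᵐ p ∂(P.prod ν), p.2 ∈ Set.Ioc (0:ℝ) 1 := by
        rw [ae_iff]
        have : {p : Ω × ℝ | ¬ p.2 ∈ Set.Ioc (0:ℝ) 1}
            = Set.univ ×ˢ (Set.Ioc (0:ℝ) 1)ᶜ := by
          ext p; simp
        rw [this, Measure.prod_prod]
        rw [hν, Measure.restrict_apply (measurableSet_Ioc.compl)]
        simp
      filter_upwards [hae] with p hp
      rw [Function.uncurry]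
      simp only [hf]
      split_ifs with h
      · rw [Real.norm_eq_abs, hg, abs_mul]
        have h1 : |(n:ℝ)-1| = (n:ℝ)-1 := abs_of_nonneg (by linarith)
        have h2 : |(1-p.2)^(n-2)| ≤ 1 := by
          rw [abs_pow]
          apply pow_le_one₀ (abs_nonneg _)
          rw [abs_le]; constructor <;> [linarith [hp.2]; linarith [hp.1]]
        calc |(n:ℝ)-1| * |(1-p.2)^(n-2)| ≤ ((n:ℝ)-1) * 1 := by
              rw [h1]; exact mul_le_mul_of_nonneg_left h2 (by linarith)
          _ = (n:ℝ)-1 := by ring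
      · simp; linarith
    exact Integrable.mono' (integrable_const _) hfmeas.aestronglyMeasurable hC
  -- apply pointwise and swap
  have hstep1 : ∫ ω, (1 - Z ω) ^ (n - 1) ∂P = ∫ ω, (∫ u, f ω u ∂ν) ∂P := by
    apply integral_congr_ae
    filter_upwards [hZ] with ω hω
    rw [hν, ← hpoint (Z ω) hω.1 hω.2]
  rw [hstep1, integral_integral_swap hfint]
  have hstep2 : ∀ u : ℝ, (∫ ω, f ω u ∂P) = (P {ω | Z ω ≤ u}).toReal * g u := by
    intro u
    have h1 : (fun ω => f ω u) = ({ω | Z ω ≤ u}).indicator (fun _ => g u) := by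
      funext ω
      by_cases h : Z ω ≤ u <;> simp [hf, Set.indicator, h]
    rw [h1, integral_indicator_const _ (measurableSet_le hZmeas measurable_const)]
    simp [smul_eq_mul]
    exact Or.inl rfl
  have hstep3 : (∫ u, (∫ ω, f ω u ∂P) ∂ν)
      = ∫ u in Set.Ioc (0:ℝ) 1, (P {ω | Z ω ≤ u}).toReal * g u := by
    rw [hν]
    apply integral_congr_ae
    apply Eventually.of_forall
    intro u
    exact hstep2 u
  rw [hstep3, hg]
  rw [← integral_const_mul]
  apply integral_congr_ae
  apply Eventually.of_forall
  intro u
  ring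


/-- If `Z` is a `[0,1]`-valued random variable with
`P{Z ≤ z}/z^k → c` as `z ↓ 0`, then `n^k · E[(1−Z)^{n−1}] → c·k!`. -/
theorem nk_expectation_limit
    (k : ℕ) (hk : 1 ≤ k) (c : ℝ) (hc : 0 ≤ c)
    {Ω : Type*} [MeasurableSpace Ω] (P : Measure Ω) [IsProbabilityMeasure P]
    (Z : Ω → ℝ) (hZmeas : Measurable Z)
    (hZ : ∀ᵐ ω ∂P, 0 ≤ Z ω ∧ Z ω ≤ 1)
    (hlim : Tendsto (fun z : ℝ => (P {ω | Z ω ≤ z}).toReal / z ^ k)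
      (nhdsWithin 0 (Set.Ioi 0)) (nhds c)) :
    Tendsto (fun n : ℕ => (n : ℝ) ^ k * ∫ ω, (1 - Z ω) ^ (n - 1) ∂P)
      atTop (nhds (c * Nat.factorial k)) := by
  set F : ℝ → ℝ := fun u => (P {ω | Z ω ≤ u}).toReal with hF
  have hFmono : Monotone F := by
    intro u v huv
    apply ENNReal.toReal_mono (measure_ne_top _ _)
    apply measure_mono
    intro ω hω
    exact le_trans hω huv
  have hFm : Measurable F := hFmono.measurable
  have hF0 : ∀ u, 0 ≤ F u := fun u => ENNReal.toReal_nonneg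
  have hF1 : ∀ u, F u ≤ 1 := by
    intro u
    rw [hF]
    calc (P {ω | Z ω ≤ u}).toReal ≤ (P Set.univ).toReal :=
          ENNReal.toReal_mono (measure_ne_top _ _) (measure_mono (Set.subset_univ _))
      _ = 1 := by simp
  have hmain := tendsto_main k c hc F hFm hF0 hF1 hlim
  apply hmain.congr'
  filter_upwards [eventually_ge_atTop 2] with n hn
  rw [fubini_identity P Z hZmeas hZ n hn]
  ring
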